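/- arXiv:math/0607364 — 3 statements merged into one kernel-verified Lean document; each statement's English description precedes it below -/
import Mathlib

section
/- For all s > √30, the function R(s) = s·e^{s²/2}·∫_s^∞ e^{-y²/2} dy satisfies 1 - s^{-2} + (5/2)s^{-4} < R(s) < 1 - s^{-2} + 3s^{-4}. -/
open Real MeasureTheory Set Filter

lemma aux_integrable_exp : Integrable (fun y : ℝ => Real.exp (-y^2/2)) := by
  have : (fun y : ℝ => Real.exp (-y^2/2)) = fun y => Real.exp (-(1/2) * y^2) := by
    funext y; congr 1; ring
  rw [this]; exact integrable_exp_neg_mul_sq (by norm_num)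

lemma aux_integrable_mul_exp : Integrable (fun y : ℝ => y * Real.exp (-y^2/2)) := by
  have : (fun y : ℝ => y * Real.exp (-y^2/2)) = fun y => y * Real.exp (-(1/2) * y^2) := by
    funext y; congr 2; ring
  rw [this]; exact integrable_mul_exp_neg_mul_sq (by norm_num)

lemma aux_tendsto_exp : Tendsto (fun y : ℝ => Real.exp (-y^2/2)) atTop (nhds 0) := by
  apply Real.tendsto_exp_atBot.comp
  have h : Tendsto (fun y : ℝ => y^2/2) atTop atTop :=
    (tendsto_pow_atTop two_ne_zero).atTop_div_const (by norm_num)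
  have := tendsto_neg_atTop_atBot.comp h
  convert this using 2 with y
  simp [Function.comp]; ring

lemma aux_deriv (y : ℝ) (hy : y ≠ 0) :
    HasDerivAt (fun y : ℝ => -(Real.exp (-y^2/2) * (y⁻¹ - (y^3)⁻¹ + 3*(y^5)⁻¹)))
      (Real.exp (-y^2/2) * (1 + 15*(y^6)⁻¹)) y := by
  have h1 : HasDerivAt (fun y : ℝ => -y^2/2) (-y) y := by
    have := ((hasDerivAt_pow 2 y).neg).div_const 2
    convert this using 1
    all_goals try rfl
    simp; ring
  have hexp : HasDerivAt (fun y : ℝ => Real.exp (-y^2/2)) (Real.exp (-y^2/2) * (-y)) y := h1.exp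
  have hinv : HasDerivAt (fun y : ℝ => y⁻¹) (-(y^2)⁻¹) y := hasDerivAt_inv hy
  have h3 : HasDerivAt (fun y : ℝ => (y^3)⁻¹) (-(3*y^(3-1)) / (y^3)^2) y :=
    (hasDerivAt_pow 3 y).inv (pow_ne_zero 3 hy)
  have h5 : HasDerivAt (fun y : ℝ => (y^5)⁻¹) (-(5*y^(5-1)) / (y^5)^2) y :=
    (hasDerivAt_pow 5 y).inv (pow_ne_zero 5 hy)
  have hg := (hinv.sub h3).add (h5.const_mul 3)
  have hF := (hexp.mul hg).neg
  convert hF using 1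
  all_goals try rfl
  simp only [Pi.add_apply, Pi.sub_apply]
  field_simp
  ring

lemma aux_deriv2 (y : ℝ) :
    HasDerivAt (fun y : ℝ => -Real.exp (-y^2/2)) (y * Real.exp (-y^2/2)) y := by
  have h1 : HasDerivAt (fun y : ℝ => -y^2/2) (-y) y := by
    have := ((hasDerivAt_pow 2 y).neg).div_const 2
    convert this using 1
    all_goals try rfl
    simp; ring
  have hexp := h1.exp.neg
  convert hexp using 1
  all_goals try rfl
  ring

/-- `∫_s^∞ y e^{-y²/2} dy = e^{-s²/2}` for any `s`. -/
lemma aux_int2 (s : ℝ) :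
    ∫ y in Set.Ioi s, y * Real.exp (-y^2/2) = Real.exp (-s^2/2) := by
  have := integral_Ioi_of_hasDerivAt_of_tendsto' (a := s) (m := 0)
    (f := fun y : ℝ => -Real.exp (-y^2/2))
    (f' := fun y : ℝ => y * Real.exp (-y^2/2))
    (fun y _ => aux_deriv2 y) aux_integrable_mul_exp.integrableOn ?_
  · rw [this]; simp
  · have := aux_tendsto_exp.neg
    simpa using this

/-- Mills' ratio bounds: for `s > √30`,
`1 - s⁻² + (5/2)s⁻⁴ < R(s) < 1 - s⁻² + 3s⁻⁴` where
`R(s) = s · exp(s²/2) · ∫_s^∞ exp(-y²/2) dy`. -/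
theorem stmt_0 (s : ℝ) (hs : s > Real.sqrt 30) :
    1 - 1 / s ^ 2 + (5 / 2) / s ^ 4 <
      s * Real.exp (s ^ 2 / 2) * ∫ y in Set.Ioi s, Real.exp (-y ^ 2 / 2) ∧
    s * Real.exp (s ^ 2 / 2) * (∫ y in Set.Ioi s, Real.exp (-y ^ 2 / 2)) <
      1 - 1 / s ^ 2 + 3 / s ^ 4 := by
  have hs0 : 0 < s := lt_of_le_of_lt (Real.sqrt_nonneg 30) hs
  have hsne : s ≠ 0 := hs0.ne'
  have hs2 : 30 < s ^ 2 := by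
    nlinarith [Real.sq_sqrt (by norm_num : (30:ℝ) ≥ 0), Real.sqrt_nonneg 30]
  set E := Real.exp (-s^2/2) with hE
  set K := Real.exp (s^2/2) with hK
  have hEpos : 0 < E := Real.exp_pos _
  have hKpos : 0 < K := Real.exp_pos _
  have hEK : E = K⁻¹ := by
    rw [hE, hK, ← Real.exp_neg]; congr 1; ring
  set I := ∫ y in Set.Ioi s, Real.exp (-y^2/2) with hIdef
  set J := ∫ y in Set.Ioi s, Real.exp (-y^2/2) * (y^6)⁻¹ with hJdef
  -- integrability
  have hIg : IntegrableOn (fun y : ℝ => Real.exp (-y^2/2)) (Set.Ioi s) :=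
    aux_integrable_exp.integrableOn
  have hJg : IntegrableOn (fun y : ℝ => Real.exp (-y^2/2) * (y^6)⁻¹) (Set.Ioi s) := by
    apply Integrable.mono' (hIg.mul_const (s^6)⁻¹)
    · exact ((Real.measurable_exp.comp (by measurability)).mul
        ((measurable_id.pow_const 6).inv)).aestronglyMeasurable
    · rw [ae_restrict_iff' measurableSet_Ioi]
      filter_upwards with y hy
      have hy0 : 0 < y := hs0.trans hy
      have h6 : s^6 ≤ y^6 := pow_le_pow_left₀ hs0.le (le_of_lt hy) 6
      rw [Real.norm_eq_abs, abs_of_nonneg (by positivity)]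
      have h' : (y^6)⁻¹ ≤ (s^6)⁻¹ := inv_anti₀ (by positivity) h6
      exact mul_le_mul_of_nonneg_left h' (Real.exp_pos _).le
  -- identity
  have hident : I + 15 * J = E * (s⁻¹ - (s^3)⁻¹ + 3*(s^5)⁻¹) := by
    have hint : IntegrableOn (fun y : ℝ => Real.exp (-y^2/2) * (1 + 15*(y^6)⁻¹)) (Set.Ioi s) := by
      have h := hIg.add (hJg.const_mul 15)
      apply IntegrableOn.congr_fun h ?_ measurableSet_Ioi
      intro y _; simp; ring
    have key := integral_Ioi_of_hasDerivAt_of_tendsto' (a := s) (m := 0)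
      (f := fun y : ℝ => -(Real.exp (-y^2/2) * (y⁻¹ - (y^3)⁻¹ + 3*(y^5)⁻¹)))
      (f' := fun y : ℝ => Real.exp (-y^2/2) * (1 + 15*(y^6)⁻¹))
      (fun y hy => aux_deriv y (ne_of_gt (lt_of_lt_of_le hs0 hy))) hint ?_
    · have hsplit : ∫ y in Set.Ioi s, Real.exp (-y^2/2) * (1 + 15*(y^6)⁻¹)
          = I + 15 * J := by
        rw [hIdef, hJdef, ← MeasureTheory.integral_const_mul, ← integral_add hIg (hJg.const_mul 15)]
        apply setIntegral_congr_fun measurableSet_Ioi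
        intro y _; ring
      rw [hsplit] at key
      rw [key]
      ring
    · have hg : Tendsto (fun y : ℝ => y⁻¹ - (y^3)⁻¹ + 3*(y^5)⁻¹) atTop (nhds 0) := by
        have h1 : Tendsto (fun y : ℝ => y⁻¹) atTop (nhds (0:ℝ)) := tendsto_inv_atTop_zero
        have h3 : Tendsto (fun y : ℝ => (y^3)⁻¹) atTop (nhds (0:ℝ)) :=
          tendsto_inv_atTop_zero.comp (tendsto_pow_atTop (by norm_num))
        have h5 : Tendsto (fun y : ℝ => (y^5)⁻¹) atTop (nhds (0:ℝ)) :=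
          tendsto_inv_atTop_zero.comp (tendsto_pow_atTop (by norm_num))
        have := (h1.sub h3).add (h5.const_mul 3)
        simpa using this
      have := (aux_tendsto_exp.mul hg).neg
      simpa using this
  -- J > 0
  have hJpos : 0 < J := by
    rw [hJdef]
    rw [setIntegral_pos_iff_support_of_nonneg_ae ?_ hJg]
    · have hsup : (Function.support fun y : ℝ => Real.exp (-y^2/2) * (y^6)⁻¹) ∩ Set.Ioi s
          = Set.Ioi s := by
        apply Set.inter_eq_right.2
        intro y hy
        have hy0 : 0 < y := hs0.trans hy
        simp only [Function.mem_support]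
        positivity
      rw [hsup]
      simp
    · rw [EventuallyLE, ae_restrict_iff' measurableSet_Ioi]
      filter_upwards with y hy
      have hy0 : 0 < y := hs0.trans hy
      positivity
  -- J ≤ E / s^7
  have hJle : J ≤ E * (s^7)⁻¹ := by
    have hmono : J ≤ ∫ y in Set.Ioi s, (s^7)⁻¹ * (y * Real.exp (-y^2/2)) := by
      rw [hJdef]
      apply setIntegral_mono_on hJg ((aux_integrable_mul_exp.integrableOn).const_mul _)
        measurableSet_Ioi
      intro y hy
      rw [Set.mem_Ioi] at hy
      have hy0 : 0 < y := hs0.trans hy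
      have h7 : s^7 ≤ y^7 := pow_le_pow_left₀ hs0.le hy.le 7
      rw [mul_comm ((s^7)⁻¹), ← div_eq_mul_inv, ← div_eq_mul_inv,
        div_le_div_iff₀ (by positivity) (by positivity)]
      nlinarith [mul_nonneg (sub_nonneg.2 h7) (Real.exp_pos (-y^2/2)).le]
    rw [MeasureTheory.integral_const_mul, aux_int2 s] at hmono
    rw [← hE] at hmono
    linarith [hmono]
  have hI' : I = E * (s⁻¹ - (s^3)⁻¹ + 3*(s^5)⁻¹) - 15*J := by linarith
  have e1 : s * K * I = 1 - 1/s^2 + 3/s^4 - 15*(s*K*J) := by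
    rw [hI', hEK]
    field_simp
  have hb : 15*(s*K*J) ≤ 15/s^6 := by
    have h := mul_le_mul_of_nonneg_left hJle (by positivity : (0:ℝ) ≤ 15*s*K)
    calc 15*(s*K*J) = 15*s*K*J := by ring
      _ ≤ 15*s*K*(E*(s^7)⁻¹) := h
      _ = 15/s^6 := by rw [hEK]; field_simp
  have hc : 15/s^6 < (1/2)/s^4 := by
    rw [div_lt_div_iff₀ (by positivity) (by positivity)]
    nlinarith [mul_lt_mul_of_pos_right hs2 (pow_pos hs0 4)]
  have hd : (1:ℝ)/2/s^4 = 3/s^4 - (5/2)/s^4 := by ring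
  have hpos : 0 < s*K*J := mul_pos (mul_pos hs0 hKpos) hJpos
  refine ⟨?_, ?_⟩ <;> rw [e1] <;> linarith
end

section
/- Let s_γ be defined by R(s_γ) = 1 - γ, where R(s) = s·e^{s²/2}·∫_s^∞ e^{-y²/2} dy. Then for all 0 < γ ≤ 1/30, |s_γ - γ^{-1/2}| ≤ 2·γ^{1/2}. -/
set_option maxHeartbeats 1000000

open Real MeasureTheory Set Filter

section MillsAux

lemma gauss_int (s : ℝ) : IntegrableOn (fun y : ℝ => exp (-y ^ 2 / 2)) (Set.Ioi s) := by
  have h := integrable_exp_neg_mul_sq (b := (1:ℝ)/2) (by norm_num)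
  have h2 : (fun y : ℝ => exp (-y ^ 2 / 2)) = fun y => exp (-(1/2) * y ^ 2) := by
    funext y; ring_nf
  rw [h2]
  exact h.integrableOn

lemma gauss_deriv (y : ℝ) : HasDerivAt (fun y : ℝ => exp (-y ^ 2 / 2)) (-y * exp (-y ^ 2 / 2)) y := by
  have h1 : HasDerivAt (fun y : ℝ => -y ^ 2 / 2) (-y) y := by
    have := ((hasDerivAt_pow 2 y).neg).div_const 2
    refine this.congr_deriv ?_; push_cast; ring
  simpa [mul_comm] using h1.exp

lemma gauss_tendsto : Tendsto (fun y : ℝ => exp (-y ^ 2 / 2)) atTop (nhds 0) := by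
  apply Real.tendsto_exp_atBot.comp
  have h : Tendsto (fun y : ℝ => y ^ 2 / 2) atTop atTop :=
    (tendsto_pow_atTop (by norm_num)).atTop_div_const (by norm_num)
  have := tendsto_neg_atBot_iff.mpr h
  simpa [neg_div] using this

-- derivative of the correction polynomial part, generic helper
lemma poly_tendsto (n : ℕ) (hn : n ≠ 0) : Tendsto (fun y : ℝ => 1 / y ^ n) atTop (nhds 0) := by
  simpa [one_div, Pi.inv_def] using (tendsto_pow_atTop hn).inv_tendsto_atTop

lemma G_deriv (y : ℝ) (hy : y ≠ 0) :
    HasDerivAt (fun y : ℝ => exp (-y ^ 2 / 2) * (1 / y - 1 / y ^ 3))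
      (exp (-y ^ 2 / 2) * (3 / y ^ 4 - 1)) y := by
  have h1 : HasDerivAt (fun y : ℝ => 1 / y - 1 / y ^ 3)
      (-(y ^ 2)⁻¹ - (-(3 * y ^ 2) / (y ^ 3) ^ 2)) y := by
    have ha : HasDerivAt (fun y : ℝ => 1 / y) (-(y ^ 2)⁻¹) y := by
      simpa [one_div] using hasDerivAt_inv hy
    have hb : HasDerivAt (fun y : ℝ => 1 / y ^ 3) (-(3 * y ^ 2) / (y ^ 3) ^ 2) y := by
      have := (hasDerivAt_pow 3 y).inv (pow_ne_zero 3 hy)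
      simpa [one_div, Pi.inv_def] using this
    exact ha.sub hb
  have := (gauss_deriv y).mul h1
  refine this.congr_deriv ?_
  field_simp
  ring

lemma H_deriv (y : ℝ) (hy : y ≠ 0) :
    HasDerivAt (fun y : ℝ => exp (-y ^ 2 / 2) * (1 / y - 1 / y ^ 3 + 3 / y ^ 5))
      (-(exp (-y ^ 2 / 2) * (1 + 15 / y ^ 6))) y := by
  have h1 : HasDerivAt (fun y : ℝ => 1 / y - 1 / y ^ 3 + 3 / y ^ 5)
      (-(y ^ 2)⁻¹ - (-(3 * y ^ 2) / (y ^ 3) ^ 2) + 3 * (-(5 * y ^ 4) / (y ^ 5) ^ 2)) y := by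
    have ha : HasDerivAt (fun y : ℝ => 1 / y) (-(y ^ 2)⁻¹) y := by
      simpa [one_div] using hasDerivAt_inv hy
    have hb : HasDerivAt (fun y : ℝ => 1 / y ^ 3) (-(3 * y ^ 2) / (y ^ 3) ^ 2) y := by
      have := (hasDerivAt_pow 3 y).inv (pow_ne_zero 3 hy)
      simpa [one_div, Pi.inv_def] using this
    have hc : HasDerivAt (fun y : ℝ => 3 / y ^ 5) (3 * (-(5 * y ^ 4) / (y ^ 5) ^ 2)) y := by
      have := ((hasDerivAt_pow 5 y).inv (pow_ne_zero 5 hy)).const_mul (3:ℝ)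
      simpa [one_div, div_eq_mul_inv] using this
    exact (ha.sub hb).add hc
  have := (gauss_deriv y).mul h1
  refine this.congr_deriv ?_
  field_simp
  ring

-- integrability of exp(-y^2/2) * q(y) where |q y| ≤ C on Ioi s, q continuous on Ioi s
lemma aux_int {s C : ℝ} {q : ℝ → ℝ} (hq : ContinuousOn q (Set.Ioi s))
    (hC : ∀ y ∈ Set.Ioi s, |q y| ≤ C) :
    IntegrableOn (fun y : ℝ => exp (-y ^ 2 / 2) * q y) (Set.Ioi s) := by
  apply Integrable.mono' ((gauss_int s).mul_const C)
  · exact (((Real.continuous_exp.comp (by continuity)).continuousOn).mul hq).aestronglyMeasurable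
      measurableSet_Ioi
  · filter_upwards [ae_restrict_mem measurableSet_Ioi] with y hy
    have h1 : |exp (-y ^ 2 / 2) * q y| = exp (-y ^ 2 / 2) * |q y| := by
      rw [abs_mul, abs_of_pos (exp_pos _)]
    rw [Real.norm_eq_abs, h1]
    exact mul_le_mul_of_nonneg_left (hC y hy) (exp_pos _).le

lemma mills_lower {s : ℝ} (hs : 0 < s) :
    exp (-s ^ 2 / 2) * (1 / s - 1 / s ^ 3) ≤ ∫ y in Set.Ioi s, exp (-y ^ 2 / 2) := by
  have hcont : ContinuousOn (fun y : ℝ => 3 / y ^ 4 - 1) (Set.Ioi s) :=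
    ContinuousOn.sub (continuousOn_const.div (by fun_prop)
      (fun y hy => pow_ne_zero _ (ne_of_gt (hs.trans hy)))) continuousOn_const
  have hint : IntegrableOn (fun y : ℝ => exp (-y ^ 2 / 2) * (3 / y ^ 4 - 1)) (Set.Ioi s) := by
    apply aux_int (C := 3 / s ^ 4 + 1) hcont
    intro y hy
    have hys : s ≤ y := le_of_lt hy
    have hy0 : (0:ℝ) < y := hs.trans hy
    have h4 : s ^ 4 ≤ y ^ 4 := pow_le_pow_left₀ hs.le hys 4
    have hy4 : (0:ℝ) < y ^ 4 := by positivity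
    have hs4 : (0:ℝ) < s ^ 4 := by positivity
    have hp : (0:ℝ) ≤ 3 / y ^ 4 := by positivity
    have hp2 : (0:ℝ) ≤ 3 / s ^ 4 := by positivity
    have hmono : 3 / y ^ 4 ≤ 3 / s ^ 4 := by gcongr <;> norm_num
    rw [abs_le]
    constructor <;> linarith
  have htend : Tendsto (fun y : ℝ => exp (-y ^ 2 / 2) * (1 / y - 1 / y ^ 3)) atTop (nhds 0) := by
    have := gauss_tendsto.mul ((poly_tendsto 1 one_ne_zero).sub (poly_tendsto 3 three_ne_zero))
    simpa [pow_one] using this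
  have key : (∫ y in Set.Ioi s, exp (-y ^ 2 / 2) * (3 / y ^ 4 - 1))
      = 0 - exp (-s ^ 2 / 2) * (1 / s - 1 / s ^ 3) :=
    integral_Ioi_of_hasDerivAt_of_tendsto'
      (fun y hy => G_deriv y (ne_of_gt (lt_of_lt_of_le hs hy))) hint htend
  have mono : (∫ y in Set.Ioi s, -(exp (-y ^ 2 / 2) * (3 / y ^ 4 - 1)))
      ≤ ∫ y in Set.Ioi s, exp (-y ^ 2 / 2) := by
    apply setIntegral_mono_on hint.neg (gauss_int s) measurableSet_Ioi
    intro y hy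
    have hy0 : (0:ℝ) < y := hs.trans hy
    have hy4 : (0:ℝ) < y ^ 4 := by positivity
    simp only [Pi.neg_apply]
    nlinarith [mul_pos (exp_pos (-y ^ 2 / 2)) (div_pos (by norm_num : (0:ℝ) < 3) hy4)]
  rw [integral_neg, key] at mono
  linarith

lemma mills_upper {s : ℝ} (hs : 0 < s) :
    (∫ y in Set.Ioi s, exp (-y ^ 2 / 2))
      ≤ exp (-s ^ 2 / 2) * (1 / s - 1 / s ^ 3 + 3 / s ^ 5) := by
  have hcont : ContinuousOn (fun y : ℝ => -(1 + 15 / y ^ 6)) (Set.Ioi s) :=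
    (continuousOn_const.add (continuousOn_const.div (by fun_prop)
      (fun y hy => pow_ne_zero _ (ne_of_gt (hs.trans hy))))).neg
  have hint : IntegrableOn (fun y : ℝ => exp (-y ^ 2 / 2) * (-(1 + 15 / y ^ 6))) (Set.Ioi s) := by
    apply aux_int (C := 1 + 15 / s ^ 6) hcont
    intro y hy
    have hys : s ≤ y := le_of_lt hy
    have hy0 : (0:ℝ) < y := hs.trans hy
    have h6 : s ^ 6 ≤ y ^ 6 := pow_le_pow_left₀ hs.le hys 6
    have hy6 : (0:ℝ) < y ^ 6 := by positivity
    have hs6 : (0:ℝ) < s ^ 6 := by positivity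
    have h1 : 15 / y ^ 6 ≤ 15 / s ^ 6 := by gcongr <;> norm_num
    have hp : (0:ℝ) ≤ 15 / y ^ 6 := by positivity
    have hp2 : (0:ℝ) ≤ 15 / s ^ 6 := by positivity
    rw [abs_le]
    constructor <;> linarith
  have hint' : IntegrableOn (fun y : ℝ => -(exp (-y ^ 2 / 2) * (1 + 15 / y ^ 6))) (Set.Ioi s) := by
    have : (fun y : ℝ => -(exp (-y ^ 2 / 2) * (1 + 15 / y ^ 6)))
        = fun y : ℝ => exp (-y ^ 2 / 2) * (-(1 + 15 / y ^ 6)) := by funext y; ring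
    rw [this]; exact hint
  have htend : Tendsto (fun y : ℝ => exp (-y ^ 2 / 2) * (1 / y - 1 / y ^ 3 + 3 / y ^ 5))
      atTop (nhds 0) := by
    have h3 : Tendsto (fun y : ℝ => 3 / y ^ 5) atTop (nhds 0) := by
      have := (poly_tendsto 5 (by norm_num)).const_mul (3:ℝ)
      simpa [div_eq_mul_inv, one_div] using this
    have := gauss_tendsto.mul
      (((poly_tendsto 1 one_ne_zero).sub (poly_tendsto 3 three_ne_zero)).add h3)
    simpa [pow_one] using this
  have key : (∫ y in Set.Ioi s, -(exp (-y ^ 2 / 2) * (1 + 15 / y ^ 6)))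
      = 0 - exp (-s ^ 2 / 2) * (1 / s - 1 / s ^ 3 + 3 / s ^ 5) :=
    integral_Ioi_of_hasDerivAt_of_tendsto'
      (fun y hy => H_deriv y (ne_of_gt (lt_of_lt_of_le hs hy))) hint' htend
  have mono : (∫ y in Set.Ioi s, exp (-y ^ 2 / 2))
      ≤ ∫ y in Set.Ioi s, -(-(exp (-y ^ 2 / 2) * (1 + 15 / y ^ 6))) := by
    apply setIntegral_mono_on (gauss_int s) hint'.neg measurableSet_Ioi
    intro y hy
    have hy0 : (0:ℝ) < y := hs.trans hy
    have hy6 : (0:ℝ) < y ^ 6 := by positivity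
    simp only [Pi.neg_apply, neg_neg]
    nlinarith [mul_pos (exp_pos (-y ^ 2 / 2)) (div_pos (by norm_num : (0:ℝ) < 15) hy6)]
  rw [integral_neg, key] at mono
  linarith

lemma mills_expo {s : ℝ} (c : ℝ) (hc : 0 < c) :
    (∫ y in Set.Ioi s, exp (-y ^ 2 / 2))
      ≤ exp (c ^ 2 / 2) * (exp (-(c * s)) / c) := by
  have hderiv : ∀ y ∈ Set.Ici s, HasDerivAt (fun y : ℝ => -(exp (-(c * y)) / c))
      (exp (-(c * y))) y := by
    intro y _
    have h1 : HasDerivAt (fun y : ℝ => -(c * y)) (-c) y := by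
      simpa [Pi.neg_def] using ((hasDerivAt_id y).const_mul c).neg
    have h2 := ((h1.exp).div_const c).neg
    refine h2.congr_deriv ?_
    field_simp [hc.ne']
  have hintc : IntegrableOn (fun y : ℝ => exp (-(c * y))) (Set.Ioi s) := by
    have := exp_neg_integrableOn_Ioi s hc
    simpa [neg_mul] using this
  have htend : Tendsto (fun y : ℝ => -(exp (-(c * y)) / c)) atTop (nhds 0) := by
    have h1 : Tendsto (fun y : ℝ => -(c * y)) atTop atBot := by
      apply tendsto_neg_atBot_iff.mpr
      exact (tendsto_id.const_mul_atTop hc)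
    have := ((Real.tendsto_exp_atBot.comp h1).div_const c).neg
    simpa using this
  have key : (∫ y in Set.Ioi s, exp (-(c * y))) = 0 - -(exp (-(c * s)) / c) :=
    integral_Ioi_of_hasDerivAt_of_tendsto' hderiv hintc htend
  have mono : (∫ y in Set.Ioi s, exp (-y ^ 2 / 2))
      ≤ ∫ y in Set.Ioi s, exp (c ^ 2 / 2) * exp (-(c * y)) := by
    apply setIntegral_mono_on (gauss_int s) (hintc.const_mul _) measurableSet_Ioi
    intro y _
    rw [← Real.exp_add]
    apply Real.exp_le_exp.mpr
    nlinarith [sq_nonneg (y - c)]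
  rw [integral_const_mul, key] at mono
  calc (∫ y in Set.Ioi s, exp (-y ^ 2 / 2)) ≤ exp (c ^ 2 / 2) * (0 - -(exp (-(c * s)) / c)) := mono
    _ = exp (c ^ 2 / 2) * (exp (-(c * s)) / c) := by ring

end MillsAux

/-- `R(s) = s·e^{s²/2}·∫_s^∞ e^{-y²/2} dy`, i.e. `s` times the standard normal Mills' ratio. -/
noncomputable def millsR (s : ℝ) : ℝ :=
  s * Real.exp (s ^ 2 / 2) * ∫ y in Set.Ioi s, Real.exp (-y ^ 2 / 2)

/-- If `R(s_γ) = 1 - γ` with `s_γ > 0` and `0 < γ ≤ 1/30`, then `|s_γ - γ^{-1/2}| ≤ 2 γ^{1/2}`. -/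
theorem stmt_10 (γ s : ℝ) (hγ0 : 0 < γ) (hγ : γ ≤ 1 / 30) (hs : 0 < s)
    (hR : millsR s = 1 - γ) :
    |s - γ ^ (-(1 : ℝ) / 2)| ≤ 2 * γ ^ ((1 : ℝ) / 2) := by
  simp only [millsR] at hR
  have hs2 : (0:ℝ) < s ^ 2 := by positivity
  have hsne : s ≠ 0 := hs.ne'
  have hE : (0:ℝ) < exp (s ^ 2 / 2) := exp_pos _
  have hEne : exp (s ^ 2 / 2) ≠ 0 := hE.ne'
  have hEinv : exp (-s ^ 2 / 2) = (exp (s ^ 2 / 2))⁻¹ := by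
    rw [← Real.exp_neg]; congr 1; ring
  -- lower bound on the integral gives γ ≤ 1/s²
  have h1 : 1 - 1 / s ^ 2 ≤ 1 - γ := by
    have hll := mills_lower hs
    have h := mul_le_mul_of_nonneg_left hll (mul_pos hs hE).le
    rw [hR] at h
    have heq : s * exp (s ^ 2 / 2) * (exp (-s ^ 2 / 2) * (1 / s - 1 / s ^ 3))
        = 1 - 1 / s ^ 2 := by
      rw [hEinv]; field_simp
    linarith [heq ▸ h]
  -- upper bound on the integral gives 1/s² - 3/s⁴ ≤ γ
  have h2 : 1 - γ ≤ 1 - 1 / s ^ 2 + 3 / s ^ 4 := by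
    have huu := mills_upper hs
    have h := mul_le_mul_of_nonneg_left huu (mul_pos hs hE).le
    rw [hR] at h
    have heq : s * exp (s ^ 2 / 2) * (exp (-s ^ 2 / 2) * (1 / s - 1 / s ^ 3 + 3 / s ^ 5))
        = 1 - 1 / s ^ 2 + 3 / s ^ 4 := by
      rw [hEinv]; field_simp
    linarith [heq ▸ h]
  have hA : γ ≤ 1 / s ^ 2 := by linarith
  have hB : 1 / s ^ 2 - 3 / s ^ 4 ≤ γ := by linarith
  -- notation for sqrt γ
  set g : ℝ := Real.sqrt γ with hgdef
  have hg : 0 < g := Real.sqrt_pos.mpr hγ0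
  have hg2 : g ^ 2 = γ := Real.sq_sqrt hγ0.le
  have e1 : γ ^ ((1:ℝ)/2) = g := (Real.sqrt_eq_rpow γ).symm
  have e2 : γ ^ (-(1:ℝ)/2) = g⁻¹ := by
    rw [show (-(1:ℝ)/2) = -((1:ℝ)/2) by norm_num, Real.rpow_neg hγ0.le, e1]
  rw [e1, e2, abs_le]
  have hAs : γ * s ^ 2 ≤ 1 := by
    have hid : 1 / s ^ 2 * s ^ 2 = 1 := by field_simp
    nlinarith [mul_le_mul_of_nonneg_right hA hs2.le]
  constructor
  · -- lower bound : -(2g) ≤ s - g⁻¹, i.e. 1/g - 2g ≤ s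
    rcases lt_or_ge s 3 with hlt | hge
    · -- small s is impossible
      exfalso
      have hc : (0:ℝ) < s + 1/3 := by positivity
      have h3 := mills_expo (s := s) (s + 1/3) hc
      have h5 := mul_le_mul_of_nonneg_left h3 (mul_pos hs hE).le
      rw [hR] at h5
      have hprod : exp (s ^ 2 / 2) * exp ((s + 1/3) ^ 2 / 2) * exp (-((s + 1/3) * s))
          = exp ((1:ℝ)/18) := by
        rw [← Real.exp_add, ← Real.exp_add]; congr 1; ring
      have heq : s * exp (s ^ 2 / 2) *
          (exp ((s + 1/3) ^ 2 / 2) * (exp (-((s + 1/3) * s)) / (s + 1/3)))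
          = s * exp ((1:ℝ)/18) / (s + 1/3) := by
        rw [← hprod]; field_simp
      rw [heq] at h5
      have h6 : (1 - γ) * (s + 1/3) ≤ s * exp ((1:ℝ)/18) := (le_div_iff₀ hc).mp h5
      have hexp : exp ((1:ℝ)/18) ≤ 18/17 := by
        have ha := Real.add_one_le_exp (-(1/18) : ℝ)
        rw [Real.exp_neg] at ha
        have hp := exp_pos ((1:ℝ)/18)
        rw [le_inv_comm₀ (by norm_num) hp] at ha
        · linarith [ha]
      nlinarith [mul_le_mul_of_nonneg_left hexp hs.le]
    · -- s ≥ 3 : use the quadratic bound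
      have ht0 : (0:ℝ) < 1 / s ^ 2 := by positivity
      set t : ℝ := 1 / s ^ 2 with htdef
      have ht : t * s ^ 2 = 1 := by rw [htdef]; field_simp
      have htu : t ≤ 1 / 9 := by
        rw [htdef]
        rw [div_le_div_iff₀ hs2 (by norm_num)]
        nlinarith
      have hq : t - 3 * t ^ 2 ≤ γ := by
        have h34 : 3 * t ^ 2 = 3 / s ^ 4 := by rw [htdef]; field_simp
        linarith [hB]
      have hγt : γ ≤ t := hA
      have hmt : (1 - 2 * γ) ^ 2 * t ≤ γ := by
        rcases le_or_gt (3 * t) (4 * γ * (1 - γ)) with hcase | hcase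
        · nlinarith [hq, mul_nonneg ht0.le (by linarith : (0:ℝ) ≤ 4 * γ * (1 - γ) - 3 * t)]
        · exfalso
          nlinarith [hq, mul_nonneg (by linarith : (0:ℝ) ≤ 3 * t - 4 * γ * (1 - γ))
              (by linarith : (0:ℝ) ≤ 1/3 - t), hγ0.le, hγ,
            mul_nonneg hγ0.le hγ0.le, mul_nonneg (mul_nonneg hγ0.le hγ0.le) hγ0.le,
            mul_nonneg (mul_nonneg hγ0.le hγ0.le) (by linarith : (0:ℝ) ≤ 1 - γ)]
      have hmain : (1 - 2 * γ) ^ 2 ≤ γ * s ^ 2 := by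
        calc (1 - 2 * γ) ^ 2 = (1 - 2 * γ) ^ 2 * (t * s ^ 2) := by rw [ht]; ring
          _ = ((1 - 2 * γ) ^ 2 * t) * s ^ 2 := by ring
          _ ≤ γ * s ^ 2 := mul_le_mul_of_nonneg_right hmt (sq_nonneg s)
      have hsg : 1 - 2 * γ ≤ s * g := by
        have hmain' : (1 - 2 * γ) ^ 2 ≤ (s * g) ^ 2 := by
          calc (1 - 2 * γ) ^ 2 ≤ γ * s ^ 2 := hmain
            _ = (s * g) ^ 2 := by rw [← hg2]; ring
        nlinarith [mul_pos hs hg]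
      have hfin : (1 - 2 * g ^ 2) / g ≤ s := by
        rw [div_le_iff₀ hg]
        nlinarith [hsg, hg2]
      have hfrac : (1 - 2 * g ^ 2) / g = 1 / g - 2 * g := by
        field_simp
      rw [hfrac] at hfin
      have : g⁻¹ = 1 / g := (one_div g).symm
      linarith
  · -- upper bound : s ≤ 1/g
    have hgs : g * s ≤ 1 := by nlinarith [mul_pos hg hs, hAs, hg2]
    have : s ≤ 1 / g := by rw [le_div_iff₀ hg]; linarith [mul_comm g s]
    have h1g : g⁻¹ = 1 / g := (one_div g).symm
    linarith
end

section
/- Define y_γ by ((1-γ)/γ)·y_γ = s_γ where R(s_γ) = 1-γ and R(s) = s·e^{s²/2}∫_s^∞ e^{-y²/2}dy. Then for all 0 < γ ≤ 1/30, |y_γ - γ^{1/2}/(1-γ)| ≤ 4·γ^{3/2}. -/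
open Real MeasureTheory

open Set Filter Topology


lemma gauss_integrable : Integrable (fun y : ℝ => Real.exp (-y ^ 2 / 2)) := by
  have h := integrable_exp_neg_mul_sq (by norm_num : (0:ℝ) < 1/2)
  convert h using 2 with y
  ring_nf

lemma gauss_hasDerivAt (y : ℝ) :
    HasDerivAt (fun y : ℝ => Real.exp (-y ^ 2 / 2)) (-y * Real.exp (-y ^ 2 / 2)) y := by
  have h : HasDerivAt (fun y : ℝ => -y ^ 2 / 2) (-y) y := by
    have := ((hasDerivAt_pow 2 y).neg).div_const 2
    simpa using this.congr_deriv (by ring)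
  simpa [mul_comm, Function.comp_def] using (Real.hasDerivAt_exp _).comp y h

lemma gauss_div_integrable {s : ℝ} (hs : 0 < s) (k : ℕ) :
    IntegrableOn (fun y : ℝ => Real.exp (-y ^ 2 / 2) / y ^ k) (Set.Ioi s) := by
  have hmeas : AEStronglyMeasurable (fun y : ℝ => Real.exp (-y ^ 2 / 2) / y ^ k)
      (volume.restrict (Set.Ioi s)) := by
    apply ContinuousOn.aestronglyMeasurable _ measurableSet_Ioi
    apply ContinuousOn.div (Continuous.continuousOn (by continuity))
      (Continuous.continuousOn (by continuity))
    intro y hy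
    exact pow_ne_zero _ (ne_of_gt (lt_trans hs hy))
  refine Integrable.mono' ((gauss_integrable.div_const (s ^ k)).integrableOn) hmeas ?_
  filter_upwards [ae_restrict_mem measurableSet_Ioi] with y hy
  have hy' : s ≤ y := le_of_lt hy
  have h1 : (0:ℝ) < y ^ k := pow_pos (lt_trans hs hy) k
  rw [Real.norm_eq_abs, abs_div, abs_of_pos (Real.exp_pos _), abs_of_pos h1]
  apply div_le_div_of_nonneg_left (le_of_lt (Real.exp_pos _)) (pow_pos hs k)
  exact pow_le_pow_left₀ (le_of_lt hs) hy' k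

lemma gauss_tendsto_zero : Tendsto (fun y : ℝ => Real.exp (-y ^ 2 / 2)) atTop (𝓝 0) := by
  apply Real.tendsto_exp_atBot.comp
  have h1 : Tendsto (fun y : ℝ => y ^ 2 / 2) atTop atTop :=
    (tendsto_pow_atTop (by norm_num)).atTop_div_const (by norm_num)
  have := tendsto_neg_atTop_atBot.comp h1
  simpa [Function.comp_def, neg_div] using this

lemma inv_pow_tendsto (k : ℕ) (hk : 1 ≤ k) : Tendsto (fun y : ℝ => 1 / y ^ k) atTop (𝓝 0) := by
  have h1 : Tendsto (fun y : ℝ => y ^ k) atTop atTop := tendsto_pow_atTop (by omega)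
  have h2 : Tendsto (fun y : ℝ => (y ^ k)⁻¹) atTop (𝓝 0) := tendsto_inv_atTop_zero.comp h1
  simpa [one_div] using h2

lemma gauss_lower {s : ℝ} (hs : 0 < s) :
    Real.exp (-s ^ 2 / 2) * (1 / s - 1 / s ^ 3) ≤ ∫ y in Set.Ioi s, Real.exp (-y ^ 2 / 2) := by
  set G : ℝ → ℝ := fun y => -(Real.exp (-y ^ 2 / 2) * (1 / y - 1 / y ^ 3)) with hG
  have hderiv : ∀ y : ℝ, 0 < y → HasDerivAt G
      (Real.exp (-y ^ 2 / 2) - 3 * (Real.exp (-y ^ 2 / 2) / y ^ 4)) y := by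
    intro y hy
    have hy0 : y ≠ 0 := ne_of_gt hy
    have h1 : HasDerivAt (fun y : ℝ => 1 / y - 1 / y ^ 3)
        (-(1 / y ^ 2) + 3 * y ^ 2 / (y ^ 3) ^ 2) y := by
      have ha : HasDerivAt (fun y : ℝ => 1 / y) (-(1 / y ^ 2)) y := by
        simpa [one_div] using hasDerivAt_inv hy0
      have hb : HasDerivAt (fun y : ℝ => 1 / y ^ 3) (-(3 * y ^ 2 / (y ^ 3) ^ 2)) y := by
        simpa [one_div, neg_div] using ((hasDerivAt_pow 3 y).fun_inv (pow_ne_zero 3 hy0))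
      simpa using ha.fun_sub hb
    have h2 := ((gauss_hasDerivAt y).fun_mul h1).fun_neg
    refine h2.congr_deriv ?_
    field_simp
    ring
  have hcont : ContinuousWithinAt G (Set.Ici s) s :=
    (hderiv s hs).continuousAt.continuousWithinAt
  have hint : IntegrableOn
      (fun y : ℝ => Real.exp (-y ^ 2 / 2) - 3 * (Real.exp (-y ^ 2 / 2) / y ^ 4))
      (Set.Ioi s) :=
    gauss_integrable.integrableOn.sub ((gauss_div_integrable hs 4).const_mul 3)
  have htend : Tendsto G atTop (𝓝 0) := by
    have h1 : Tendsto (fun y : ℝ => 1 / y - 1 / y ^ 3) atTop (𝓝 0) := by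
      have := (inv_pow_tendsto 1 le_rfl).sub (inv_pow_tendsto 3 (by norm_num))
      simpa using this
    have := (gauss_tendsto_zero.mul h1).neg
    rw [hG]
    simpa using this
  have key := integral_Ioi_of_hasDerivAt_of_tendsto hcont
    (fun y hy => hderiv y (lt_trans hs hy)) hint htend
  have hsplit : ∫ y in Set.Ioi s,
      (Real.exp (-y ^ 2 / 2) - 3 * (Real.exp (-y ^ 2 / 2) / y ^ 4)) =
      (∫ y in Set.Ioi s, Real.exp (-y ^ 2 / 2)) -
      3 * ∫ y in Set.Ioi s, Real.exp (-y ^ 2 / 2) / y ^ 4 := by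
    rw [integral_sub gauss_integrable.integrableOn ((gauss_div_integrable hs 4).const_mul 3),
      integral_const_mul]
  have hnn : 0 ≤ ∫ y in Set.Ioi s, Real.exp (-y ^ 2 / 2) / y ^ 4 := by
    apply setIntegral_nonneg measurableSet_Ioi
    intro y hy
    positivity
  rw [hsplit] at key
  have hGs : G s = -(Real.exp (-s ^ 2 / 2) * (1 / s - 1 / s ^ 3)) := rfl
  nlinarith [key, hnn]

lemma gauss_upper {s : ℝ} (hs : 0 < s) :
    (∫ y in Set.Ioi s, Real.exp (-y ^ 2 / 2)) ≤
      Real.exp (-s ^ 2 / 2) * (1 / s - 1 / s ^ 3 + 3 / s ^ 5) := by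
  set G : ℝ → ℝ := fun y => -(Real.exp (-y ^ 2 / 2) * (1 / y - 1 / y ^ 3 + 3 / y ^ 5)) with hG
  have hderiv : ∀ y : ℝ, 0 < y → HasDerivAt G
      (Real.exp (-y ^ 2 / 2) + 15 * (Real.exp (-y ^ 2 / 2) / y ^ 6)) y := by
    intro y hy
    have hy0 : y ≠ 0 := ne_of_gt hy
    have ha : HasDerivAt (fun y : ℝ => 1 / y) (-(1 / y ^ 2)) y := by
      simpa [one_div] using hasDerivAt_inv hy0
    have hb : HasDerivAt (fun y : ℝ => 1 / y ^ 3) (-(3 * y ^ 2) / (y ^ 3) ^ 2) y := by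
      simpa [one_div] using ((hasDerivAt_pow 3 y).fun_inv (pow_ne_zero 3 hy0))
    have hc : HasDerivAt (fun y : ℝ => 3 / y ^ 5) (3 * (-(5 * y ^ 4) / (y ^ 5) ^ 2)) y := by
      have := ((hasDerivAt_pow 5 y).inv (pow_ne_zero 5 hy0)).const_mul (3:ℝ)
      simpa [one_div, div_eq_mul_inv, mul_comm] using this
    have h1 := (ha.fun_sub hb).fun_add hc
    have h2 := ((gauss_hasDerivAt y).fun_mul h1).fun_neg
    refine h2.congr_deriv ?_
    field_simp
    ring
  have hcont : ContinuousWithinAt G (Set.Ici s) s :=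
    (hderiv s hs).continuousAt.continuousWithinAt
  have hint : IntegrableOn
      (fun y : ℝ => Real.exp (-y ^ 2 / 2) + 15 * (Real.exp (-y ^ 2 / 2) / y ^ 6))
      (Set.Ioi s) :=
    gauss_integrable.integrableOn.add ((gauss_div_integrable hs 6).const_mul 15)
  have htend : Tendsto G atTop (𝓝 0) := by
    have h1 : Tendsto (fun y : ℝ => 1 / y - 1 / y ^ 3 + 3 / y ^ 5) atTop (𝓝 0) := by
      have h3 := (inv_pow_tendsto 5 (by norm_num)).const_mul (3:ℝ)
      have := ((inv_pow_tendsto 1 le_rfl).sub (inv_pow_tendsto 3 (by norm_num))).add h3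
      simpa [mul_one_div, div_eq_mul_inv] using this
    have := (gauss_tendsto_zero.mul h1).neg
    rw [hG]
    simpa using this
  have key := integral_Ioi_of_hasDerivAt_of_tendsto hcont
    (fun y hy => hderiv y (lt_trans hs hy)) hint htend
  have hsplit : ∫ y in Set.Ioi s,
      (Real.exp (-y ^ 2 / 2) + 15 * (Real.exp (-y ^ 2 / 2) / y ^ 6)) =
      (∫ y in Set.Ioi s, Real.exp (-y ^ 2 / 2)) +
      15 * ∫ y in Set.Ioi s, Real.exp (-y ^ 2 / 2) / y ^ 6 := by
    rw [integral_add gauss_integrable.integrableOn ((gauss_div_integrable hs 6).const_mul 15),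
      integral_const_mul]
  have hnn : 0 ≤ ∫ y in Set.Ioi s, Real.exp (-y ^ 2 / 2) / y ^ 6 := by
    apply setIntegral_nonneg measurableSet_Ioi
    intro y hy
    positivity
  rw [hsplit] at key
  have hGs : G s = -(Real.exp (-s ^ 2 / 2) * (1 / s - 1 / s ^ 3 + 3 / s ^ 5)) := rfl
  nlinarith [key, hnn]

lemma sqrt_key {y : ℝ} (hy : 0 < y) :
    y ^ 3 + 6 * y ≤ Real.sqrt (y ^ 2 + 8) * (y ^ 2 + 2) := by
  have hw : 0 < Real.sqrt (y ^ 2 + 8) := Real.sqrt_pos.mpr (by positivity)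
  have hw2 : Real.sqrt (y ^ 2 + 8) ^ 2 = y ^ 2 + 8 := Real.sq_sqrt (by positivity)
  have e : (Real.sqrt (y ^ 2 + 8) * (y ^ 2 + 2)) ^ 2 = (y ^ 3 + 6 * y) ^ 2 + 32 := by
    rw [mul_pow, hw2]; ring
  nlinarith [e, mul_pos hw (by positivity : (0:ℝ) < y ^ 2 + 2), hy,
    sq_nonneg (Real.sqrt (y ^ 2 + 8) * (y ^ 2 + 2) + (y ^ 3 + 6 * y))]

lemma birnbaum_bracket {y : ℝ} (hy : 0 < y) :
    1 ≤ 4 * y / (3 * y + Real.sqrt (y ^ 2 + 8)) +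
      4 * (3 + y / Real.sqrt (y ^ 2 + 8)) / (3 * y + Real.sqrt (y ^ 2 + 8)) ^ 2 := by
  set w := Real.sqrt (y ^ 2 + 8) with hw
  have hwpos : 0 < w := Real.sqrt_pos.mpr (by positivity)
  have hw2 : w ^ 2 = y ^ 2 + 8 := Real.sq_sqrt (by positivity)
  have hd : 0 < 3 * y + w := by positivity
  have hkey := sqrt_key hy
  have h1 : w * (3 * y + w) ^ 2 ≤ 4 * y * w * (3 * y + w) + 4 * (3 * w + y) := by
    have e1 : w ^ 3 = w * (y ^ 2 + 8) := by
      rw [pow_succ, hw2]; ring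
    nlinarith [hkey, hw2, e1]
  rw [← sub_nonneg]
  have h2 : 4 * y / (3 * y + w) + 4 * (3 + y / w) / (3 * y + w) ^ 2 - 1 =
      (4 * y * w * (3 * y + w) + 4 * (3 * w + y) - w * (3 * y + w) ^ 2) /
        (w * (3 * y + w) ^ 2) := by
    field_simp
  rw [h2]
  apply div_nonneg (by linarith) (by positivity)

lemma gauss_birnbaum {s : ℝ} (hs : 0 < s) :
    (∫ y in Set.Ioi s, Real.exp (-y ^ 2 / 2)) ≤
      Real.exp (-s ^ 2 / 2) * (4 / (3 * s + Real.sqrt (s ^ 2 + 8))) := by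
  set D : ℝ → ℝ := fun y => Real.exp (-y ^ 2 / 2) *
      (4 * y / (3 * y + Real.sqrt (y ^ 2 + 8)) +
        4 * (3 + y / Real.sqrt (y ^ 2 + 8)) / (3 * y + Real.sqrt (y ^ 2 + 8)) ^ 2) with hD
  set G : ℝ → ℝ := fun y =>
      -(Real.exp (-y ^ 2 / 2) * (4 / (3 * y + Real.sqrt (y ^ 2 + 8)))) with hG
  have hwc : Continuous fun y : ℝ => Real.sqrt (y ^ 2 + 8) :=
    Real.continuous_sqrt.comp (by continuity)
  have hderiv : ∀ y : ℝ, 0 < y → HasDerivAt G (D y) y := by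
    intro y hy
    have hwpos : 0 < Real.sqrt (y ^ 2 + 8) := Real.sqrt_pos.mpr (by positivity)
    have hdpos : 0 < 3 * y + Real.sqrt (y ^ 2 + 8) := by positivity
    have hw : HasDerivAt (fun y : ℝ => Real.sqrt (y ^ 2 + 8))
        ((2 : ℕ) * y ^ (2 - 1) / (2 * Real.sqrt (y ^ 2 + 8))) y :=
      HasDerivAt.sqrt ((hasDerivAt_pow 2 y).add_const 8) (by positivity)
    have hden : HasDerivAt (fun y : ℝ => 3 * y + Real.sqrt (y ^ 2 + 8))
        (3 * 1 + (2 : ℕ) * y ^ (2 - 1) / (2 * Real.sqrt (y ^ 2 + 8))) y :=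
      ((hasDerivAt_id y).const_mul 3).add hw
    have hh : HasDerivAt
        (fun y : ℝ => 4 / (3 * y + Real.sqrt (y ^ 2 + 8)))
        (4 * (-(3 * 1 + (2 : ℕ) * y ^ (2 - 1) / (2 * Real.sqrt (y ^ 2 + 8))) /
          (3 * y + Real.sqrt (y ^ 2 + 8)) ^ 2)) y := by
      have := (hden.inv (ne_of_gt hdpos)).const_mul (4 : ℝ)
      simpa [div_eq_mul_inv] using this
    have h2 := ((gauss_hasDerivAt y).fun_mul hh).fun_neg
    refine h2.congr_deriv ?_
    rw [hD]
    field_simp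
    ring
  have hcont : ContinuousWithinAt G (Set.Ici s) s :=
    (hderiv s hs).continuousAt.continuousWithinAt
  have hDbound : ∀ y : ℝ, y ∈ Set.Ioi s → D y ≤ (4 / 3 + 16 / (9 * s ^ 2)) *
      Real.exp (-y ^ 2 / 2) := by
    intro y hy
    have hy0 : (0:ℝ) < y := lt_trans hs hy
    have hwpos : 0 < Real.sqrt (y ^ 2 + 8) := Real.sqrt_pos.mpr (by positivity)
    have hdpos : 0 < 3 * y + Real.sqrt (y ^ 2 + 8) := by positivity
    have hyw : y ≤ Real.sqrt (y ^ 2 + 8) := by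
      rw [show y ^ 2 + 8 = y ^ 2 + 8 from rfl]
      calc y = Real.sqrt (y ^ 2) := by rw [Real.sqrt_sq hy0.le]
      _ ≤ Real.sqrt (y ^ 2 + 8) := Real.sqrt_le_sqrt (by linarith)
    have ht1 : 4 * y / (3 * y + Real.sqrt (y ^ 2 + 8)) ≤ 4 / 3 := by
      rw [div_le_div_iff₀ hdpos (by norm_num)]
      nlinarith [hwpos]
    have ht2 : 4 * (3 + y / Real.sqrt (y ^ 2 + 8)) /
        (3 * y + Real.sqrt (y ^ 2 + 8)) ^ 2 ≤ 16 / (9 * s ^ 2) := by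
      have hnum : 4 * (3 + y / Real.sqrt (y ^ 2 + 8)) ≤ 16 := by
        have : y / Real.sqrt (y ^ 2 + 8) ≤ 1 := by
          rw [div_le_one hwpos]; exact hyw
        linarith
      have hden2 : 9 * s ^ 2 ≤ (3 * y + Real.sqrt (y ^ 2 + 8)) ^ 2 := by
        nlinarith [hs, (show s < y from hy).le, hwpos]
      calc 4 * (3 + y / Real.sqrt (y ^ 2 + 8)) / (3 * y + Real.sqrt (y ^ 2 + 8)) ^ 2
          ≤ 16 / (3 * y + Real.sqrt (y ^ 2 + 8)) ^ 2 := by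
            apply div_le_div_of_nonneg_right hnum (by positivity) |>.trans_eq rfl
      _ ≤ 16 / (9 * s ^ 2) := by
            apply div_le_div_of_nonneg_left (by norm_num) (by positivity) hden2
    rw [hD]
    rw [mul_comm (4 / 3 + 16 / (9 * s ^ 2)) (Real.exp (-y ^ 2 / 2))]
    apply mul_le_mul_of_nonneg_left _ (Real.exp_pos _).le
    linarith
  have hDint : IntegrableOn D (Set.Ioi s) := by
    have hmeas : AEStronglyMeasurable D (volume.restrict (Set.Ioi s)) := by
      apply ContinuousOn.aestronglyMeasurable _ measurableSet_Ioi
      apply ContinuousOn.mul (Continuous.continuousOn (by continuity))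
      apply ContinuousOn.add
      · apply ContinuousOn.div (Continuous.continuousOn (by continuity))
          ((continuous_const.mul continuous_id).add hwc).continuousOn
        intro y hy
        have hy0 : (0:ℝ) < y := lt_trans hs hy
        have hwpos : 0 < Real.sqrt (y ^ 2 + 8) := Real.sqrt_pos.mpr (by positivity)
        show (3:ℝ) * y + Real.sqrt (y ^ 2 + 8) ≠ 0; exact ne_of_gt (by linarith)
      · apply ContinuousOn.div
        · apply Continuous.continuousOn
          apply continuous_const.mul
          apply continuous_const.add
          apply Continuous.div continuous_id hwc
          intro y
          exact ne_of_gt (Real.sqrt_pos.mpr (by positivity))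
        · exact (((continuous_const.mul continuous_id).add hwc).pow 2).continuousOn
        · intro y hy
          have hy0 : (0:ℝ) < y := lt_trans hs hy
          have hwpos : 0 < Real.sqrt (y ^ 2 + 8) := Real.sqrt_pos.mpr (by positivity)
          positivity
    refine Integrable.mono' ((gauss_integrable.const_mul (4 / 3 + 16 / (9 * s ^ 2))).integrableOn)
      hmeas ?_
    filter_upwards [ae_restrict_mem measurableSet_Ioi] with y hy
    have hy0 : (0:ℝ) < y := lt_trans hs hy
    have hwpos : 0 < Real.sqrt (y ^ 2 + 8) := Real.sqrt_pos.mpr (by positivity)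
    have hDnn : 0 ≤ D y := by
      rw [hD]
      have hdpos : 0 < 3 * y + Real.sqrt (y ^ 2 + 8) := by positivity
      positivity
    rw [Real.norm_eq_abs, abs_of_nonneg hDnn]
    exact hDbound y hy
  have htend : Tendsto G atTop (𝓝 0) := by
    have hdenom : Tendsto (fun y : ℝ => 3 * y + Real.sqrt (y ^ 2 + 8)) atTop atTop := by
      apply tendsto_atTop_mono (fun y => ?_) (tendsto_id.const_mul_atTop (by norm_num : (0:ℝ) < 3))
      have : 0 ≤ Real.sqrt (y ^ 2 + 8) := Real.sqrt_nonneg _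
      simp only [id_eq]
      linarith
    have h1 : Tendsto (fun y : ℝ => 4 / (3 * y + Real.sqrt (y ^ 2 + 8))) atTop (𝓝 0) :=
      Tendsto.div_atTop tendsto_const_nhds hdenom
    have := (gauss_tendsto_zero.mul h1).neg
    rw [hG]
    simpa using this
  have key := integral_Ioi_of_hasDerivAt_of_tendsto hcont
    (fun y hy => hderiv y (lt_trans hs hy)) hDint htend
  have hmono : (∫ y in Set.Ioi s, Real.exp (-y ^ 2 / 2)) ≤ ∫ y in Set.Ioi s, D y := by
    apply setIntegral_mono_on gauss_integrable.integrableOn hDint measurableSet_Ioi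
    intro y hy
    have hy0 : (0:ℝ) < y := lt_trans hs hy
    have hbr := birnbaum_bracket hy0
    rw [hD]
    nlinarith [Real.exp_pos (-y ^ 2 / 2), hbr]
  rw [key] at hmono
  have hGs : G s = -(Real.exp (-s ^ 2 / 2) * (4 / (3 * s + Real.sqrt (s ^ 2 + 8)))) := rfl
  linarith [hmono]

set_option maxHeartbeats 1000000 in
/-- With `y_γ = γ·s_γ/(1-γ)` where `R(s_γ) = 1-γ`, `s_γ > 0`: for `0 < γ ≤ 1/30`,
`|y_γ - γ^{1/2}/(1-γ)| ≤ 4 γ^{3/2}`. -/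
theorem stmt_11 (γ s y : ℝ) (hγ0 : 0 < γ) (hγ : γ ≤ 1 / 30) (hs : 0 < s)
    (hR : millsR s = 1 - γ) (hy : ((1 - γ) / γ) * y = s) :
    |y - γ ^ ((1 : ℝ) / 2) / (1 - γ)| ≤ 4 * γ ^ ((3 : ℝ) / 2) := by
  have hs0 : s ≠ 0 := ne_of_gt hs
  have hγ1 : 0 < 1 - γ := by linarith
  have hexp : Real.exp (s ^ 2 / 2) * Real.exp (-s ^ 2 / 2) = 1 := by
    rw [← Real.exp_add, show s ^ 2 / 2 + -s ^ 2 / 2 = 0 by ring, Real.exp_zero]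
  have hse : 0 < s * Real.exp (s ^ 2 / 2) := by positivity
  -- bound A : 1 - 1/s² ≤ 1 - γ
  have hA : 1 - 1 / s ^ 2 ≤ 1 - γ := by
    have hb := mul_le_mul_of_nonneg_left (gauss_lower hs) hse.le
    rw [show s * Real.exp (s ^ 2 / 2) * (Real.exp (-s ^ 2 / 2) * (1 / s - 1 / s ^ 3)) =
      (Real.exp (s ^ 2 / 2) * Real.exp (-s ^ 2 / 2)) * (s * (1 / s - 1 / s ^ 3)) from by ring,
      hexp, one_mul] at hb
    have h2 : s * (1 / s - 1 / s ^ 3) = 1 - 1 / s ^ 2 := by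
      field_simp
    rw [h2] at hb
    calc 1 - 1 / s ^ 2 ≤ s * Real.exp (s ^ 2 / 2) * ∫ y in Set.Ioi s, Real.exp (-y ^ 2 / 2) := hb
    _ = 1 - γ := hR
  -- bound B : 1 - γ ≤ 1 - 1/s² + 3/s⁴
  have hB : 1 - γ ≤ 1 - 1 / s ^ 2 + 3 / s ^ 4 := by
    have hb := mul_le_mul_of_nonneg_left (gauss_upper hs) hse.le
    rw [show s * Real.exp (s ^ 2 / 2) * (Real.exp (-s ^ 2 / 2) * (1 / s - 1 / s ^ 3 + 3 / s ^ 5)) =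
      (Real.exp (s ^ 2 / 2) * Real.exp (-s ^ 2 / 2)) * (s * (1 / s - 1 / s ^ 3 + 3 / s ^ 5))
      from by ring, hexp, one_mul] at hb
    have h2 : s * (1 / s - 1 / s ^ 3 + 3 / s ^ 5) = 1 - 1 / s ^ 2 + 3 / s ^ 4 := by
      field_simp
    rw [h2] at hb
    calc 1 - γ = s * Real.exp (s ^ 2 / 2) * ∫ y in Set.Ioi s, Real.exp (-y ^ 2 / 2) := hR.symm
    _ ≤ 1 - 1 / s ^ 2 + 3 / s ^ 4 := hb
  -- bound C : 1 - γ ≤ 4s/(3s + √(s²+8))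
  have hC : 1 - γ ≤ 4 * s / (3 * s + Real.sqrt (s ^ 2 + 8)) := by
    have hb := mul_le_mul_of_nonneg_left (gauss_birnbaum hs) hse.le
    rw [show s * Real.exp (s ^ 2 / 2) *
        (Real.exp (-s ^ 2 / 2) * (4 / (3 * s + Real.sqrt (s ^ 2 + 8)))) =
      (Real.exp (s ^ 2 / 2) * Real.exp (-s ^ 2 / 2)) * (s * (4 / (3 * s + Real.sqrt (s ^ 2 + 8))))
      from by ring, hexp, one_mul] at hb
    have h2 : s * (4 / (3 * s + Real.sqrt (s ^ 2 + 8))) =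
        4 * s / (3 * s + Real.sqrt (s ^ 2 + 8)) := by ring
    rw [h2] at hb
    calc 1 - γ = s * Real.exp (s ^ 2 / 2) * ∫ y in Set.Ioi s, Real.exp (-y ^ 2 / 2) := hR.symm
    _ ≤ _ := hb
  -- algebraic consequences
  have fA : γ * s ^ 2 ≤ 1 := by
    have hγs : γ ≤ 1 / s ^ 2 := by linarith
    have := mul_le_mul_of_nonneg_right hγs (sq_nonneg s)
    rw [one_div, inv_mul_cancel₀ (by positivity : s ^ 2 ≠ 0)] at this
    exact this
  have fB : s ^ 2 - 3 ≤ γ * s ^ 4 := by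
    have hγs : 1 / s ^ 2 - 3 / s ^ 4 ≤ γ := by linarith
    have h := mul_le_mul_of_nonneg_right hγs (by positivity : (0:ℝ) ≤ s ^ 4)
    have h2 : (1 / s ^ 2 - 3 / s ^ 4) * s ^ 4 = s ^ 2 - 3 := by field_simp
    rw [h2] at h
    exact h
  have fC : (27 : ℝ) ≤ s ^ 2 := by
    have hwpos : 0 < Real.sqrt (s ^ 2 + 8) := Real.sqrt_pos.mpr (by positivity)
    have hw2 : Real.sqrt (s ^ 2 + 8) ^ 2 = s ^ 2 + 8 := Real.sq_sqrt (by positivity)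
    have hdpos : 0 < 3 * s + Real.sqrt (s ^ 2 + 8) := by positivity
    rw [le_div_iff₀ hdpos] at hC
    have h29 : 29 * Real.sqrt (s ^ 2 + 8) ≤ 33 * s := by
      nlinarith [mul_le_mul_of_nonneg_right (show (29:ℝ)/30 ≤ 1 - γ by linarith) hdpos.le, hC]
    nlinarith [mul_le_mul h29 h29 (by positivity) (by positivity), hw2]
  -- key lower bound on γ s²
  have hvpos : 0 < γ * s ^ 2 := by positivity
  have hv27 : 27 * γ ≤ γ * s ^ 2 := by nlinarith [mul_le_mul_of_nonneg_left fC hγ0.le]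
  have hv2 : γ * s ^ 2 - 3 * γ ≤ (γ * s ^ 2) ^ 2 := by
    nlinarith [mul_le_mul_of_nonneg_left fB hγ0.le]
  have hkey : (1 - 4 * γ + 4 * γ ^ 2) ^ 2 ≤ γ * s ^ 2 := by
    by_contra hcon
    push_neg at hcon
    have hT : γ * s ^ 2 < 1 - 8 * γ + 24 * γ ^ 2 := by nlinarith [hcon, hγ0, hγ]
    -- v := γ s², v < T' := 1 - 8γ + 24γ²  together with v² ≥ v - 3γ forces v small
    have h1 : γ * s ^ 2 * (8 * γ - 24 * γ ^ 2) ≤ 3 * γ := by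
      nlinarith [mul_le_mul_of_nonneg_left hT.le hvpos.le, hv2]
    have h3 : γ * s ^ 2 * ((1 - 3 * γ) * 8) ≤ 3 := by
      have h2 : γ * (γ * s ^ 2 * ((1 - 3 * γ) * 8)) ≤ γ * 3 := by linear_combination h1
      exact le_of_mul_le_mul_left h2 hγ0
    have h4 : γ * s ^ 2 ≤ 5 / 12 := by
      nlinarith [mul_le_mul_of_nonneg_left (show (9:ℝ)/10 ≤ 1 - 3*γ by linarith) hvpos.le, h3]
    have h5 : γ * s ^ 2 * (7 / 12) ≤ 3 * γ := by
      nlinarith [hv2, mul_le_mul_of_nonneg_left h4 hvpos.le]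
    linarith [hv27, h5, hγ0]
  -- translate to sqrt
  set r := Real.sqrt γ with hrdef
  have hrpos : 0 < r := Real.sqrt_pos.mpr hγ0
  have hr2 : r ^ 2 = γ := Real.sq_sqrt hγ0.le
  have hrs1 : r * s ≤ 1 := by
    nlinarith [fA, hr2, mul_nonneg hrpos.le hs.le]
  have hrs2 : 1 - 4 * γ + 4 * γ ^ 2 ≤ r * s := by
    have ha : 0 < 1 - 4 * γ + 4 * γ ^ 2 := by nlinarith [hγ0, hγ]
    nlinarith [hkey, hr2, mul_nonneg hrpos.le hs.le, ha]
  -- rewrite the rpow's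
  have e1 : γ ^ ((1 : ℝ) / 2) = r := (Real.sqrt_eq_rpow γ).symm
  have e2 : γ ^ ((3 : ℝ) / 2) = γ * r := by
    rw [show (3 : ℝ)/2 = 1 + 1/2 by norm_num, Real.rpow_add hγ0, Real.rpow_one,
      ← Real.sqrt_eq_rpow]
  rw [e1, e2]
  have hyval : (1 - γ) * y = γ * s := by
    have := hy
    field_simp at this
    linarith [this]
  have hyv : y = γ * s / (1 - γ) := by
    rw [eq_div_iff (ne_of_gt hγ1)]
    linarith [hyval]
  rw [hyv, div_sub_div_same, abs_div, abs_of_pos hγ1, div_le_iff₀ hγ1]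
  rw [abs_le]
  constructor
  · nlinarith [hrs2, hr2, hrpos, hγ0, hγ, mul_le_mul_of_nonneg_left hrs2 hrpos.le]
  · nlinarith [hrs1, hr2, hrpos, mul_le_mul_of_nonneg_left hrs1 hrpos.le,
      mul_nonneg (mul_nonneg hγ0.le hrpos.le) hγ1.le]
end
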